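/- Let F : ℝ^n → ℝ^m be continuously differentiable with compact level set {x ∈ ℝ^n : F_i(x) ≤ F_i(x^0) for all i} for the initial point x^0. Let 0 < a ≤ b, 0 < α_min ≤ α_max, and σ, γ ∈ (0,1). Suppose the sequence {x^k} ⊆ ℝ^n satisfies, for every k ≥ 0: B_k is a symmetric n×n matrix with aI ⪯ B_k ⪯ bI; α^k_i ∈ [α_min, α_max] for all i; d^k ≠ 0 is the unique minimizer over ℝ^n of d ↦ max_{i∈{1,…,m}} ⟨∇F_i(x^k), d⟩/α^k_i + (1/2)‖d‖_{B_k}²; t_k ∈ (0,1] satisfies the Armijo condition at x^k in direction d^k, and either t_k = 1 or the Armijo condition fails at x^k in direction d^k with stepsize t_k/γ for some index i; and x^{k+1} = x^k + t_k d^k. Then {x^k} has at least one accumulation point, and every accumulation point of {x^k} is Pareto critical for F. -/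

import Mathlib

open scoped RealInnerProductSpace

/-- Maximum of a function over the (nonempty) finite index type `Fin m`. -/
noncomputable def fmax {m : ℕ} [NeZero m] (f : Fin m → ℝ) : ℝ :=
  Finset.univ.sup' Finset.univ_nonempty f

/-- A point `x` is Pareto critical for `F` if there is no direction `d` with
`⟨∇F_i(x), d⟩ < 0` for all `i`. -/
def ParetoCritical {n m : ℕ} (F : Fin m → EuclideanSpace ℝ (Fin n) → ℝ)
    (x : EuclideanSpace ℝ (Fin n)) : Prop :=
  ¬∃ d : EuclideanSpace ℝ (Fin n), ∀ i, ⟪gradient (F i) x, d⟫ < 0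

theorem fmax_le_iff {m : ℕ} [NeZero m] (f : Fin m → ℝ) (c : ℝ) :
    fmax f ≤ c ↔ ∀ i, f i ≤ c := by
  simp [fmax, Finset.sup'_le_iff]

theorem le_fmax {m : ℕ} [NeZero m] (f : Fin m → ℝ) (i : Fin m) : f i ≤ fmax f :=
  Finset.le_sup' f (Finset.mem_univ i)

set_option maxHeartbeats 4000000 in
/-- Global convergence of the Barzilai–Borwein descent method with
variable metrics: under a compact level set assumption and uniform bounds on the metrics
and BB parameters, the iterate sequence has at least one accumulation point, and every
accumulation point is Pareto critical. -/
theorem stmt12 {n m : ℕ} [NeZero m] (F : Fin m → EuclideanSpace ℝ (Fin n) → ℝ)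
    (hF : ∀ i, ContDiff ℝ 1 (F i))
    (x : ℕ → EuclideanSpace ℝ (Fin n))
    (hlevel : IsCompact {y : EuclideanSpace ℝ (Fin n) | ∀ i, F i y ≤ F i (x 0)})
    (a b : ℝ) (ha : 0 < a) (hab : a ≤ b)
    (αmin αmax : ℝ) (hαmin : 0 < αmin) (hαmm : αmin ≤ αmax)
    (σ γ : ℝ) (hσ : σ ∈ Set.Ioo (0 : ℝ) 1) (hγ : γ ∈ Set.Ioo (0 : ℝ) 1)
    (B : ℕ → EuclideanSpace ℝ (Fin n) →ₗ[ℝ] EuclideanSpace ℝ (Fin n))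
    (hsym : ∀ k, ∀ u v : EuclideanSpace ℝ (Fin n), ⟪B k u, v⟫ = ⟪u, B k v⟫)
    (hBa : ∀ k, ∀ u : EuclideanSpace ℝ (Fin n), a * ‖u‖ ^ 2 ≤ ⟪u, B k u⟫)
    (hBb : ∀ k, ∀ u : EuclideanSpace ℝ (Fin n), ⟪u, B k u⟫ ≤ b * ‖u‖ ^ 2)
    (α : ℕ → Fin m → ℝ) (hα : ∀ k i, α k i ∈ Set.Icc αmin αmax)
    (d : ℕ → EuclideanSpace ℝ (Fin n)) (hd0 : ∀ k, d k ≠ 0)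
    (hdmin : ∀ k, ∀ e : EuclideanSpace ℝ (Fin n),
      (fmax fun i => ⟪gradient (F i) (x k), d k⟫ / α k i) + ⟪d k, B k (d k)⟫ / 2 ≤
        (fmax fun i => ⟪gradient (F i) (x k), e⟫ / α k i) + ⟪e, B k e⟫ / 2)
    (t : ℕ → ℝ) (ht : ∀ k, t k ∈ Set.Ioc (0 : ℝ) 1)
    (harmijo : ∀ k i, F i (x k + t k • d k) - F i (x k) ≤
      σ * t k * ⟪gradient (F i) (x k), d k⟫)
    (hmaximal : ∀ k, t k = 1 ∨ ∃ i,
      σ * (t k / γ) * ⟪gradient (F i) (x k), d k⟫ <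
        F i (x k + (t k / γ) • d k) - F i (x k))
    (hstep : ∀ k, x (k + 1) = x k + t k • d k) :
    (∃ xa : EuclideanSpace ℝ (Fin n), ∃ φ : ℕ → ℕ, StrictMono φ ∧
        Filter.Tendsto (x ∘ φ) Filter.atTop (nhds xa)) ∧
      ∀ xa : EuclideanSpace ℝ (Fin n),
        (∃ φ : ℕ → ℕ, StrictMono φ ∧ Filter.Tendsto (x ∘ φ) Filter.atTop (nhds xa)) →
          ParetoCritical F xa := by
  obtain ⟨hσ0, hσ1⟩ := hσ
  obtain ⟨hγ0, hγ1⟩ := hγ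
  have hm : 0 < m := Nat.pos_of_ne_zero (NeZero.ne m)
  set g : Fin m → EuclideanSpace ℝ (Fin n) → EuclideanSpace ℝ (Fin n) :=
    fun i => gradient (F i) with hg
  have hgc : ∀ i, Continuous (g i) := by
    intro i
    have h1 : Continuous (fderiv ℝ (F i)) := (hF i).continuous_fderiv one_ne_zero
    exact (InnerProductSpace.toDual ℝ _).symm.continuous.comp h1
  have hgrad : ∀ i y, HasGradientAt (F i) (g i y) y :=
    fun i y => (((hF i).differentiable one_ne_zero) y).hasGradientAt
  set θ : ℕ → ℝ := fun k => fmax fun i => ⟪g i (x k), d k⟫ / α k i with hθdef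
  -- basic bound on θ
  have hθ : ∀ k, θ k ≤ -(a * ‖d k‖ ^ 2 / 2) := by
    intro k
    have h0 := hdmin k 0
    have hr : ((fmax fun i => ⟪g i (x k), (0 : EuclideanSpace ℝ (Fin n))⟫ / α k i)
        + ⟪(0 : EuclideanSpace ℝ (Fin n)), B k 0⟫ / 2) = 0 := by
      simp [fmax]
    rw [hr] at h0
    have h2 := hBa k (d k)
    simp only [hθdef]
    linarith
  have hθneg : ∀ k, θ k < 0 := by
    intro k
    have h1 := hθ k
    have h2 : 0 < ‖d k‖ := norm_pos_iff.2 (hd0 k)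
    nlinarith [mul_pos ha (pow_pos h2 2)]
  -- inner product bound
  have hgd : ∀ k i, ⟪g i (x k), d k⟫ ≤ αmin * θ k := by
    intro k i
    have h1 : ⟪g i (x k), d k⟫ / α k i ≤ θ k := by
      simp only [hθdef]; exact le_fmax (fun i => ⟪g i (x k), d k⟫ / α k i) i
    have hαp : 0 < α k i := lt_of_lt_of_le hαmin (hα k i).1
    have h2 : ⟪g i (x k), d k⟫ ≤ α k i * θ k := by
      rw [mul_comm]; exact (div_le_iff₀ hαp).1 h1
    nlinarith [(hα k i).1, hθneg k]
  -- descent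
  have hdesc : ∀ k i, F i (x (k + 1)) - F i (x k) ≤ σ * t k * (αmin * θ k) := by
    intro k i
    rw [hstep k]
    refine le_trans (harmijo k i) ?_
    have h1 := hgd k i
    have htk := (ht k).1
    exact mul_le_mul_of_nonneg_left h1 (by positivity)
  have hanti : ∀ i, Antitone fun k => F i (x k) := by
    intro i
    apply antitone_nat_of_succ_le
    intro k
    have h1 := hdesc k i
    have htk := (ht k).1
    nlinarith [mul_pos hσ0 htk, mul_neg_of_pos_of_neg hαmin (hθneg k)]
  have hmem : ∀ k, x k ∈ {y : EuclideanSpace ℝ (Fin n) | ∀ i, F i y ≤ F i (x 0)} :=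
    fun k i => hanti i (Nat.zero_le k)
  -- accumulation point exists
  obtain ⟨x₀a, -, φ₀, hφ₀, hconv₀⟩ := hlevel.tendsto_subseq hmem
  refine ⟨⟨x₀a, φ₀, hφ₀, hconv₀⟩, ?_⟩
  -- gradient bound on iterates
  have hGex : ∃ G : ℝ, 0 < G ∧ ∀ k i, ‖g i (x k)‖ ≤ G := by
    have h1 : ∀ i : Fin m, ∃ Gi : ℝ, ∀ y ∈ {y : EuclideanSpace ℝ (Fin n) | ∀ i, F i y ≤ F i (x 0)},
        ‖g i y‖ ≤ Gi := by
      intro i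
      obtain ⟨z, -, hz⟩ := hlevel.exists_isMaxOn ⟨x 0, hmem 0⟩ ((hgc i).norm.continuousOn)
      exact ⟨‖g i z‖, fun y hy => hz hy⟩
    choose Gi hGi using h1
    refine ⟨(Finset.univ.sup' Finset.univ_nonempty Gi) ⊔ 1, ?_, ?_⟩
    · exact lt_of_lt_of_le one_pos le_sup_right
    · intro k i
      exact le_trans (hGi i _ (hmem k))
        (le_trans (Finset.le_sup' Gi (Finset.mem_univ i)) le_sup_left)
  obtain ⟨G, hG0, hGb⟩ := hGex
  -- norm bound on directions
  set C : ℝ := 2 * G / (a * αmin) with hCdef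
  have hC0 : 0 < C := by positivity
  have hdC : ∀ k, ‖d k‖ ≤ C := by
    intro k
    have hdp : 0 < ‖d k‖ := norm_pos_iff.2 (hd0 k)
    have i0 : Fin m := ⟨0, hm⟩
    have hαp : 0 < α k i0 := lt_of_lt_of_le hαmin (hα k i0).1
    have h1 : -(G * ‖d k‖ / αmin) ≤ θ k := by
      simp only [hθdef]
      refine le_trans ?_ (le_fmax (fun i => ⟪g i (x k), d k⟫ / α k i) i0)
      have h2 : -(G * ‖d k‖) ≤ ⟪g i0 (x k), d k⟫ := by
        have h3 : -⟪g i0 (x k), d k⟫ ≤ ‖g i0 (x k)‖ * ‖d k‖ := by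
          have := real_inner_le_norm (-(g i0 (x k))) (d k)
          simpa [inner_neg_left] using this
        nlinarith [hGb k i0, norm_nonneg (d k)]
      rw [neg_le, ← neg_div, div_le_div_iff₀ hαp hαmin]
      have hnn : 0 ≤ G * ‖d k‖ := by positivity
      nlinarith [(hα k i0).1, h2, hαp]
    have h4 := hθ k
    rw [hCdef, le_div_iff₀ (by positivity)]
    have h5 : a * ‖d k‖ ^ 2 / 2 ≤ G * ‖d k‖ / αmin := by linarith
    rw [div_le_div_iff₀ (by norm_num) hαmin] at h5
    nlinarith
  -- t * (-θ) → 0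
  have i0 : Fin m := ⟨0, hm⟩
  have hbb : BddBelow (Set.range fun k => F i0 (x k)) := by
    obtain ⟨z, -, hz⟩ := hlevel.exists_isMinOn ⟨x 0, hmem 0⟩ ((hF i0).continuous.continuousOn)
    exact ⟨F i0 z, by rintro y ⟨k, rfl⟩; exact hz (hmem k)⟩
  have hdiff0 : Filter.Tendsto (fun k => F i0 (x k) - F i0 (x (k + 1)))
      Filter.atTop (nhds 0) := by
    have h1 := tendsto_atTop_ciInf (fun j k hjk => hanti i0 hjk) hbb
    have h2 : Filter.Tendsto (fun k => F i0 (x (k + 1))) Filter.atTop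
        (nhds (⨅ k, F i0 (x k))) := h1.comp (Filter.tendsto_add_atTop_nat 1)
    simpa using h1.sub h2
  have htθ : Filter.Tendsto (fun k => t k * (-θ k)) Filter.atTop (nhds 0) := by
    refine squeeze_zero (fun k => by nlinarith [(ht k).1, hθneg k])
      (fun k => ?_) (by simpa using hdiff0.div_const (σ * αmin))
    have h1 := hdesc k i0
    rw [le_div_iff₀ (by positivity)]
    nlinarith
  -- main part: accumulation points are Pareto critical
  intro xa ⟨φ, hφ, hconv⟩
  rintro ⟨v, hv⟩
  -- c : uniform negativity at xa
  set c : ℝ := -(fmax fun i => ⟪g i xa, v⟫) with hcdef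
  have hc0 : 0 < c := by
    have : (fmax fun i => ⟪g i xa, v⟫) < 0 :=
      (Finset.sup'_lt_iff Finset.univ_nonempty).2 (fun i _ => hv i)
    simpa [hcdef] using this
  have hcub : ∀ i, ⟪g i xa, v⟫ ≤ -c := by
    intro i
    have := le_fmax (fun i => ⟪g i xa, v⟫) i
    simp only [hcdef]; linarith
  -- choose s and ε
  have hb0 : 0 < b := lt_of_lt_of_le ha hab
  have hαmax : 0 < αmax := lt_of_lt_of_le hαmin hαmm
  set s : ℝ := (c / (2 * αmax)) / (b * ‖v‖ ^ 2 + 1) with hsdef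
  have hs0 : 0 < s := by positivity
  set ε : ℝ := s * c / (4 * αmax) with hεdef
  have hε0 : 0 < ε := by positivity
  -- neighborhood where θ ≤ -ε
  have hnbd1 : ∀ᶠ y in nhds xa, ∀ i, ⟪g i y, v⟫ < -c / 2 := by
    refine Filter.eventually_all.2 fun i => ?_
    refine (isOpen_lt ((hgc i).inner continuous_const) continuous_const).mem_nhds ?_
    have := hcub i; simp only [Set.mem_setOf_eq]; linarith
  obtain ⟨ρ1, hρ1, hball1⟩ := Metric.eventually_nhds_iff.1 hnbd1
  have hθε : ∀ k, dist (x k) xa < ρ1 → θ k ≤ -ε := by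
    intro k hk
    have h0 := hdmin k (s • v)
    have hq : ⟪d k, B k (d k)⟫ / 2 ≥ 0 := by nlinarith [hBa k (d k), norm_nonneg (d k)]
    have hf : (fmax fun i => ⟪g i (x k), s • v⟫ / α k i) ≤ -(s * c) / (2 * αmax) := by
      rw [fmax_le_iff]
      intro i
      have hαp : 0 < α k i := lt_of_lt_of_le hαmin (hα k i).1
      have h1 : ⟪g i (x k), s • v⟫ = s * ⟪g i (x k), v⟫ := real_inner_smul_right _ _ _
      have h2 : ⟪g i (x k), v⟫ < -c / 2 := hball1 hk i
      rw [h1, div_le_div_iff₀ hαp (by positivity)]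
      have h3 : s * ⟪g i (x k), v⟫ ≤ s * (-c / 2) :=
        mul_le_mul_of_nonneg_left h2.le hs0.le
      nlinarith [mul_le_mul_of_nonneg_right h3 (by positivity : (0:ℝ) ≤ 2 * αmax),
        mul_le_mul_of_nonneg_left (hα k i).2 (by positivity : (0:ℝ) ≤ s * c)]
    have hquad : ⟪s • v, B k (s • v)⟫ / 2 ≤ s ^ 2 * (b * ‖v‖ ^ 2) / 2 := by
      have h1 : ⟪s • v, B k (s • v)⟫ = s ^ 2 * ⟪v, B k v⟫ := by
        rw [map_smul, real_inner_smul_left, real_inner_smul_right]; ring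
      rw [h1]
      nlinarith [hBb k v]
    have hsb : s * (b * ‖v‖ ^ 2) ≤ c / (2 * αmax) := by
      rw [hsdef, div_mul_eq_mul_div, div_le_iff₀ (by positivity)]
      nlinarith [sq_nonneg ‖v‖, div_pos (by positivity : (0:ℝ) < c) (by positivity : (0:ℝ) < 2 * αmax)]
    have hkey : θ k ≤ -(s * c) / (2 * αmax) + s ^ 2 * (b * ‖v‖ ^ 2) / 2 := by
      simp only [hθdef]
      calc (fmax fun i => ⟪g i (x k), d k⟫ / α k i)
          ≤ (fmax fun i => ⟪g i (x k), d k⟫ / α k i) + ⟪d k, B k (d k)⟫ / 2 := by linarith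
        _ ≤ (fmax fun i => ⟪g i (x k), s • v⟫ / α k i) + ⟪s • v, B k (s • v)⟫ / 2 := h0
        _ ≤ -(s * c) / (2 * αmax) + s ^ 2 * (b * ‖v‖ ^ 2) / 2 := by linarith
    have h6 : s ^ 2 * (b * ‖v‖ ^ 2) / 2 ≤ s * (c / (2 * αmax)) / 2 := by nlinarith
    rw [hεdef]
    have h7 : -(s * c) / (2 * αmax) = -(s * (c / (2 * αmax))) := by ring
    rw [h7] at hkey
    have h8 : s * c / (4 * αmax) = s * (c / (2 * αmax)) / 2 := by ring
    rw [h8]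
    linarith
  -- eventually along the subsequence
  have hevball : ∀ᶠ k in Filter.atTop, dist (x (φ k)) xa < ρ1 := by
    have := hconv (Metric.ball_mem_nhds xa hρ1)
    simpa [Metric.mem_ball] using this
  have hevθ : ∀ᶠ k in Filter.atTop, θ (φ k) ≤ -ε := hevball.mono fun k hk => hθε _ hk
  -- t ∘ φ → 0
  have htφ : Filter.Tendsto (fun k => t (φ k)) Filter.atTop (nhds 0) := by
    refine squeeze_zero' (Filter.Eventually.of_forall fun k => le_of_lt (ht (φ k)).1)
      (hevθ.mono fun k hk => ?_)
      (by simpa using (htθ.comp hφ.tendsto_atTop).div_const ε)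
    have h1 : ε ≤ -θ (φ k) := by linarith
    have h2 := (ht (φ k)).1
    rw [le_div_iff₀ hε0]
    nlinarith
  -- continuity of gradients at xa, tolerance
  set δ : ℝ := (1 - σ) * αmin * ε with hδdef
  have hδ0 : 0 < δ := by
    have : 0 < 1 - σ := by linarith
    positivity
  set η : ℝ := δ / (2 * (C + 1)) with hηdef
  have hη0 : 0 < η := by positivity
  have hnbd2 : ∀ᶠ y in nhds xa, ∀ i, ‖g i y - g i xa‖ < η := by
    refine Filter.eventually_all.2 fun i => ?_
    refine (isOpen_lt ((hgc i).sub continuous_const).norm continuous_const).mem_nhds ?_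
    show ‖g i xa - g i xa‖ < η
    simpa using hη0
  obtain ⟨ρ2, hρ2, hball2⟩ := Metric.eventually_nhds_iff.1 hnbd2
  -- pick a good index
  have hev2 : ∀ᶠ k in Filter.atTop, dist (x (φ k)) xa < ρ2 / 2 := by
    have := hconv (Metric.ball_mem_nhds xa (by positivity : (0:ℝ) < ρ2 / 2))
    simpa [Metric.mem_ball] using this
  have hev3 : ∀ᶠ k in Filter.atTop, t (φ k) < 1 := by
    have := htφ (Iio_mem_nhds one_pos)
    simpa using this
  have hev4 : ∀ᶠ k in Filter.atTop, t (φ k) < γ * ρ2 / (2 * C) := by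
    have := htφ (Iio_mem_nhds (by positivity : (0:ℝ) < γ * ρ2 / (2 * C)))
    simpa using this
  obtain ⟨k, hkθ, hk2, hk3, hk4⟩ := (hevθ.and (hev2.and (hev3.and hev4))).exists
  set K := φ k with hKdef
  have htK := ht K
  have hτ : 0 < t K / γ := div_pos htK.1 hγ0
  rcases hmaximal K with h1 | ⟨i, hi⟩
  · exact absurd h1 (ne_of_lt hk3)
  -- derivative along the segment
  have hderiv : ∀ r : ℝ, HasDerivAt (fun r : ℝ => F i (x K + r • d K))
      ⟪g i (x K + r • d K), d K⟫ r := by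
    intro r
    have hline : HasDerivAt (fun r : ℝ => x K + r • d K) (d K) r := by
      simpa using ((hasDerivAt_id r).smul_const (d K)).const_add (x K)
    have hgf : HasFDerivAt (F i)
        (InnerProductSpace.toDual ℝ _ (g i (x K + r • d K))) (x K + r • d K) :=
      (hgrad i _).hasFDerivAt
    have h := hgf.comp_hasDerivAt r hline
    simp only [InnerProductSpace.toDual_apply_apply] at h
    exact h
  obtain ⟨cc, hcc, hslope⟩ := exists_hasDerivAt_eq_slope
    (fun r : ℝ => F i (x K + r • d K)) _ hτ
    (fun r _ => (hderiv r).continuousAt.continuousWithinAt) (fun r _ => hderiv r)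
  set ξ := x K + cc • d K with hξdef
  have hAB : F i (x K + (t K / γ) • d K) - F i (x K) = (t K / γ) * ⟪g i ξ, d K⟫ := by
    have h2 := hslope
    simp only [sub_zero, zero_smul, add_zero] at h2
    rw [h2, mul_comm, div_mul_cancel₀ _ (ne_of_gt hτ)]
  have hgt : σ * ⟪g i (x K), d K⟫ < ⟪g i ξ, d K⟫ := by
    rw [hAB] at hi
    have h3 : (t K / γ) * (σ * ⟪g i (x K), d K⟫) < (t K / γ) * ⟪g i ξ, d K⟫ := by
      have he : (t K / γ) * (σ * ⟪g i (x K), d K⟫) = σ * (t K / γ) * ⟪g i (x K), d K⟫ := by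
        ring
      rw [he]; exact hi
    exact (mul_lt_mul_iff_right₀ hτ).1 h3
  -- lower bound on the inner product gap
  have hlow : δ < ⟪g i ξ - g i (x K), d K⟫ := by
    rw [inner_sub_left]
    have h4 : ⟪g i (x K), d K⟫ ≤ αmin * θ K := hgd K i
    have h6 : ⟪g i (x K), d K⟫ ≤ -(αmin * ε) := by nlinarith [hkθ]
    simp only [hδdef]
    nlinarith [hgt, h6,
      mul_nonneg (by linarith : (0:ℝ) ≤ 1 - σ)
        (by linarith : (0:ℝ) ≤ -⟪g i (x K), d K⟫ - αmin * ε)]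
  -- upper bound on the inner product gap
  have hdKC := hdC K
  have hτC : (t K / γ) * C < ρ2 / 2 := by
    have hk4' : t K * (2 * C) < γ * ρ2 := (lt_div_iff₀ (by positivity)).1 hk4
    rw [div_mul_eq_mul_div, div_lt_iff₀ hγ0]
    linarith
  have hξball : dist ξ xa < ρ2 := by
    have hd1 : dist ξ (x K) ≤ (t K / γ) * C := by
      rw [hξdef, dist_eq_norm, add_sub_cancel_left, norm_smul, Real.norm_eq_abs,
        abs_of_pos hcc.1]
      exact mul_le_mul hcc.2.le hdKC (norm_nonneg _) hτ.le
    have h7 := dist_triangle ξ (x K) xa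
    linarith
  have h9 := hball2 hξball i
  have h10 := hball2 (show dist (x K) xa < ρ2 by linarith) i
  have hup : ⟪g i ξ - g i (x K), d K⟫ ≤ 2 * η * C := by
    have h11 : ⟪g i ξ - g i (x K), d K⟫ ≤ ‖g i ξ - g i (x K)‖ * ‖d K‖ :=
      real_inner_le_norm _ _
    have h12 : ‖g i ξ - g i (x K)‖ ≤ ‖g i ξ - g i xa‖ + ‖g i (x K) - g i xa‖ := by
      have := norm_add_le (g i ξ - g i xa) (g i xa - g i (x K))
      simp only [sub_add_sub_cancel] at this
      rw [norm_sub_rev (g i xa)] at this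
      exact this
    nlinarith [norm_nonneg (g i ξ - g i (x K)), norm_nonneg (d K)]
  have hfin : 2 * η * C < δ := by
    have h13 : 2 * η * (C + 1) = δ := by rw [hηdef]; field_simp
    nlinarith [hη0]
  linarith
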